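/- Let t > 1 be a real number and let 𝒫 be a finite set of primes satisfying ∑_{p∈𝒫} p^{−t} ≤ 1 + (1 − ∑_{p∈𝒫} p^{−2t})^{1/2}. Then for every natural number k ≥ 1, ∑_{n∈ℕ_k(𝒫)} n^{−t} ≥ ∑_{n∈ℕ_{k+1}(𝒫)} n^{−t}. -/

import Mathlib

/-- A nonempty set of natural numbers is *primitive* if no element of the set divides
another element of the set; the singleton set `{1}` is not considered primitive. -/
def Primitive (S : Set ℕ) : Prop :=
  S.Nonempty ∧ S ≠ {1} ∧ ∀ a ∈ S, ∀ b ∈ S, a ∣ b → a = b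

/-- `NSet P` is the set `ℕ(P)` of natural numbers all of whose prime factors lie in `P`
(the multiplicative semigroup generated by `P`, which contains `1`). -/
def NSet (P : Set ℕ) : Set ℕ :=
  {n : ℕ | 0 < n ∧ ∀ p : ℕ, p.Prime → p ∣ n → p ∈ P}

/-- `NkSet P k = ℕ_k(P)`: the elements of `ℕ(P)` with exactly `k` prime factors
counted with multiplicity. -/
def NkSet (P : Set ℕ) (k : ℕ) : Set ℕ :=
  {n ∈ NSet P | n.primeFactorsList.length = k}

/-- `NgeSet P k = ℕ_{≥k}(P)`: the elements of `ℕ(P)` with at least `k` prime factors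
counted with multiplicity. -/
def NgeSet (P : Set ℕ) (k : ℕ) : Set ℕ :=
  {n ∈ NSet P | k ≤ n.primeFactorsList.length}

open Classical in
/-- The finset of elements of `ℕ_k(P)` all of whose prime factors are `≥ p`. -/
noncomputable def Aset (P : Finset ℕ) (k p : ℕ) : Finset ℕ :=
  ((∏ q ∈ P, q) ^ k).divisors.filter
    (fun n => n ∈ NkSet ↑P k ∧ ∀ q : ℕ, q.Prime → q ∣ n → p ≤ q)

/-- The recursively defined sum `F k p = ∑_{n ∈ ℕ_k(P), P⁻(n) ≥ p} n^{-t}`. -/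
noncomputable def Fval (P : Finset ℕ) (t : ℝ) : ℕ → ℕ → ℝ
  | 0, _ => 1
  | (k+1), p => ∑ q ∈ P.filter (fun r => p ≤ r), (q : ℝ) ^ (-t) * Fval P t k q

lemma list_prod_dvd_pow {N : ℕ} : ∀ (l : List ℕ), (∀ x ∈ l, x ∣ N) → l.prod ∣ N ^ l.length
  | [], _ => by simp
  | (a :: l), h => by
    simp only [List.prod_cons, List.length_cons, pow_succ']
    exact mul_dvd_mul (h a List.mem_cons_self)
      (list_prod_dvd_pow l (fun x hx => h x (List.mem_cons_of_mem a hx)))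

lemma mem_Aset {P : Finset ℕ} (hP : ∀ p ∈ P, Nat.Prime p) {k p n : ℕ} :
    n ∈ Aset P k p ↔ n ∈ NkSet ↑P k ∧ ∀ q : ℕ, q.Prime → q ∣ n → p ≤ q := by
  classical
  constructor
  · intro h
    exact (Finset.mem_filter.mp h).2
  · intro h
    refine Finset.mem_filter.mpr ⟨?_, h⟩
    have hn0 : n ≠ 0 := h.1.1.1.ne'
    have hN : (∏ q ∈ P, q) ≠ 0 :=
      Finset.prod_ne_zero_iff.mpr (fun q hq => (hP q hq).pos.ne')
    refine Nat.mem_divisors.mpr ⟨?_, pow_ne_zero _ hN⟩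
    have hdvd : n.primeFactorsList.prod ∣ (∏ q ∈ P, q) ^ n.primeFactorsList.length := by
      refine list_prod_dvd_pow _ (fun x hx => ?_)
      exact Finset.dvd_prod_of_mem _ (h.1.1.2 x (Nat.prime_of_mem_primeFactorsList hx)
        (Nat.dvd_of_mem_primeFactorsList hx))
    rw [Nat.prod_primeFactorsList hn0, h.1.2] at hdvd
    exact hdvd

lemma Aset_zero {P : Finset ℕ} (hP : ∀ p ∈ P, Nat.Prime p) (p : ℕ) :
    Aset P 0 p = {1} := by
  ext n
  rw [mem_Aset hP, Finset.mem_singleton]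
  constructor
  · rintro ⟨⟨⟨hn0, -⟩, hlen⟩, -⟩
    have : n.primeFactorsList = [] := List.length_eq_zero_iff.mp hlen
    rcases (Nat.primeFactorsList_eq_nil n).mp this with h | h
    · omega
    · exact h
  · rintro rfl
    refine ⟨⟨⟨one_pos, fun q hq hdvd => absurd (Nat.eq_one_of_dvd_one hdvd) hq.ne_one⟩, by simp⟩,
      fun q hq hdvd => absurd (Nat.eq_one_of_dvd_one hdvd) hq.ne_one⟩

lemma sum_Aset (P : Finset ℕ) (hP : ∀ p ∈ P, Nat.Prime p) (t : ℝ) :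
    ∀ k p, ∑ n ∈ Aset P k p, (n : ℝ) ^ (-t) = Fval P t k p := by
  intro k
  induction k with
  | zero => intro p; rw [Aset_zero hP]; simp [Fval]
  | succ k ih =>
    intro p
    rw [Fval]
    have key : ∑ n ∈ Aset P (k+1) p, (n : ℝ) ^ (-t)
        = ∑ z ∈ (P.filter (fun r => p ≤ r)).sigma (fun q => Aset P k q),
            (z.1 : ℝ) ^ (-t) * (z.2 : ℝ) ^ (-t) := by
      refine Finset.sum_bij' (fun n _ => ⟨n.minFac, n / n.minFac⟩)
        (fun z _ => z.1 * z.2) ?_ ?_ ?_ ?_ ?_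
      · -- forward membership
        intro n hn
        rw [mem_Aset hP] at hn
        obtain ⟨⟨⟨hn0, hfac⟩, hlen⟩, hge⟩ := hn
        have hn1 : n ≠ 1 := by
          intro h; rw [h] at hlen; simp at hlen
        have hq : n.minFac.Prime := Nat.minFac_prime hn1
        have hqd : n.minFac ∣ n := Nat.minFac_dvd n
        have hm0 : 0 < n / n.minFac := Nat.div_pos (Nat.le_of_dvd hn0 hqd) hq.pos
        have hnm : n.minFac * (n / n.minFac) = n := Nat.mul_div_cancel' hqd
        refine Finset.mem_sigma.mpr ⟨Finset.mem_filter.mpr ⟨hfac _ hq hqd, hge _ hq hqd⟩, ?_⟩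
        rw [mem_Aset hP]
        have hmdvd : n / n.minFac ∣ n := Nat.div_dvd_of_dvd hqd
        refine ⟨⟨⟨hm0, fun r hr hrd => hfac r hr (hrd.trans hmdvd)⟩, ?_⟩,
          fun r hr hrd => Nat.minFac_le_of_dvd hr.two_le (hrd.trans hmdvd)⟩
        -- length
        show (n / n.minFac).primeFactorsList.length = k
        have := Nat.perm_primeFactorsList_mul (Nat.Prime.ne_zero hq) hm0.ne'
        rw [hnm] at this
        have hlen2 := this.length_eq
        rw [List.length_append, Nat.primeFactorsList_prime hq] at hlen2
        simp only [List.length_cons, List.length_nil] at hlen2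
        omega
      · -- backward membership
        rintro ⟨q, m⟩ hz
        obtain ⟨hq, hm⟩ := Finset.mem_sigma.mp hz
        obtain ⟨hqP, hpq⟩ := Finset.mem_filter.mp hq
        have hqprime := hP q hqP
        rw [mem_Aset hP] at hm ⊢
        obtain ⟨⟨⟨hm0, hmfac⟩, hmlen⟩, hmge⟩ := hm
        have hmul0 : 0 < q * m := Nat.mul_pos hqprime.pos hm0
        have hdvd : ∀ r : ℕ, r.Prime → r ∣ q * m → r = q ∨ r ∣ m := by
          intro r hr hrd
          rcases (Nat.Prime.dvd_mul hr).mp hrd with h | h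
          · exact Or.inl ((Nat.prime_dvd_prime_iff_eq hr hqprime).mp h)
          · exact Or.inr h
        refine ⟨⟨⟨hmul0, fun r hr hrd => ?_⟩, ?_⟩, fun r hr hrd => ?_⟩
        · rcases hdvd r hr hrd with rfl | h
          · exact hqP
          · exact hmfac r hr h
        · show (q * m).primeFactorsList.length = k + 1
          have hmlen' : m.primeFactorsList.length = k := hmlen
          have := Nat.perm_primeFactorsList_mul hqprime.ne_zero hm0.ne'
          have hlen2 := this.length_eq
          rw [List.length_append, Nat.primeFactorsList_prime hqprime] at hlen2
          simp only [List.length_cons, List.length_nil] at hlen2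
          omega
        · rcases hdvd r hr hrd with rfl | h
          · exact hpq
          · exact hpq.trans (hmge r hr h)
      · -- left inverse
        intro n hn
        exact Nat.mul_div_cancel' (Nat.minFac_dvd n)
      · -- right inverse
        rintro ⟨q, m⟩ hz
        obtain ⟨hq, hm⟩ := Finset.mem_sigma.mp hz
        obtain ⟨hqP, hpq⟩ := Finset.mem_filter.mp hq
        have hqprime := hP q hqP
        rw [mem_Aset hP] at hm
        obtain ⟨⟨⟨hm0, hmfac⟩, hmlen⟩, hmge⟩ := hm
        have hmf : (q * m).minFac = q := by
          have h1 : 1 < q * m :=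
            lt_of_lt_of_le hqprime.one_lt (Nat.le_mul_of_pos_right q hm0)
          have hle : (q * m).minFac ≤ q :=
            Nat.minFac_le_of_dvd hqprime.two_le (Dvd.intro m rfl)
          have hprime : (q * m).minFac.Prime := Nat.minFac_prime h1.ne'
          have hge2 : q ≤ (q * m).minFac := by
            rcases (Nat.Prime.dvd_mul hprime).mp (Nat.minFac_dvd _) with h | h
            · exact ((Nat.prime_dvd_prime_iff_eq hprime hqprime).mp h).ge
            · exact hmge _ hprime h
          omega
        show (⟨(q*m).minFac, q*m/(q*m).minFac⟩ : Σ _ : ℕ, ℕ) = ⟨q, m⟩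
        rw [hmf, Nat.mul_div_cancel_left m hqprime.pos]
      · -- values agree
        intro n hn
        rw [mem_Aset hP] at hn
        have hn1 : n ≠ 1 := by
          intro h
          have := hn.1.2
          rw [h] at this; simp at this
        have hq : n.minFac.Prime := Nat.minFac_prime hn1
        have hnm : n.minFac * (n / n.minFac) = n := Nat.mul_div_cancel' (Nat.minFac_dvd n)
        have hm0 : 0 < n / n.minFac := Nat.div_pos (Nat.le_of_dvd hn.1.1.1 (Nat.minFac_dvd n)) hq.pos
        conv_lhs => rw [← hnm]
        push_cast
        rw [Real.mul_rpow (by positivity) (by positivity)]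
    rw [key, Finset.sum_sigma]
    refine Finset.sum_congr rfl (fun q hq => ?_)
    rw [← ih q, Finset.mul_sum]

lemma sum_sq_le_sq_sum (Q : Finset ℕ) (x : ℕ → ℝ) (hx : ∀ q ∈ Q, 0 ≤ x q) :
    ∑ q ∈ Q, (x q) ^ 2 ≤ (∑ q ∈ Q, x q) ^ 2 := by
  have h : ∀ q ∈ Q, (x q) ^ 2 ≤ x q * ∑ r ∈ Q, x r := by
    intro q hq
    rw [sq]
    exact mul_le_mul_of_nonneg_left (Finset.single_le_sum hx hq) (hx q hq)
  calc ∑ q ∈ Q, (x q) ^ 2 ≤ ∑ q ∈ Q, x q * ∑ r ∈ Q, x r := Finset.sum_le_sum h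
    _ = (∑ q ∈ Q, x q) ^ 2 := by rw [← Finset.sum_mul, sq]

lemma symm_identity (Q : Finset ℕ) (x : ℕ → ℝ) :
    2 * (∑ q ∈ Q, ∑ r ∈ Q.filter (fun r => q ≤ r), x q * x r)
      = (∑ q ∈ Q, x q) ^ 2 + ∑ q ∈ Q, (x q) ^ 2 := by
  classical
  set C : ℝ := ∑ q ∈ Q, ∑ r ∈ Q.filter (fun r => q < r), x q * x r with hCdef
  have hSC : ∑ q ∈ Q, ∑ r ∈ Q.filter (fun r => q ≤ r), x q * x r
      = C + ∑ q ∈ Q, (x q) ^ 2 := by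
    rw [hCdef, ← Finset.sum_add_distrib]
    refine Finset.sum_congr rfl (fun q hq => ?_)
    have hins : Q.filter (fun r => q ≤ r) = insert q (Q.filter (fun r => q < r)) := by
      ext r
      simp only [Finset.mem_filter, Finset.mem_insert]
      constructor
      · rintro ⟨hr, hle⟩
        rcases lt_or_eq_of_le hle with h | h
        · exact Or.inr ⟨hr, h⟩
        · exact Or.inl h.symm
      · rintro (rfl | ⟨hr, hlt⟩)
        · exact ⟨hq, le_refl _⟩
        · exact ⟨hr, hlt.le⟩
    rw [hins, Finset.sum_insert (by simp)]
    rw [← sq]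
    ring
  have hBC : ∑ q ∈ Q, ∑ r ∈ Q.filter (fun r => ¬ q ≤ r), x q * x r = C := by
    have hfe : ∀ q : ℕ, Q.filter (fun r => ¬ q ≤ r) = Q.filter (fun r => r < q) := by
      intro q
      ext r
      simp [not_le]
    rw [Finset.sum_congr rfl (fun q _ => by rw [hfe q])]
    rw [Finset.sum_comm' (t := fun q => Q.filter (fun r => r < q))
      (s' := fun r => Q.filter (fun q => r < q)) (t' := Q)
      (by intro a b; simp only [Finset.mem_filter]; tauto)]
    rw [hCdef]
    refine Finset.sum_congr rfl (fun r _ => ?_)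
    refine Finset.sum_congr rfl (fun q _ => ?_)
    ring
  have hsplit : (∑ q ∈ Q, x q) * (∑ q ∈ Q, x q)
      = (C + ∑ q ∈ Q, (x q) ^ 2) + C := by
    rw [Finset.sum_mul_sum]
    rw [← hSC, ← hBC, ← Finset.sum_add_distrib]
    refine Finset.sum_congr rfl (fun q _ => ?_)
    rw [← Finset.sum_filter_add_sum_filter_not Q (fun r => q ≤ r)]
  rw [hSC]
  nlinarith [hsplit]

lemma Fval_base (P : Finset ℕ) (t : ℝ) (ht : 1 < t) (hP : ∀ p ∈ P, Nat.Prime p)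
    (hineq : ∑ p ∈ P, (p : ℝ) ^ (-t) ≤
      1 + Real.sqrt (1 - ∑ p ∈ P, (p : ℝ) ^ (-(2 * t)))) (p : ℕ) :
    Fval P t 2 p ≤ Fval P t 1 p := by
  classical
  have hxnonneg : ∀ q : ℕ, 0 ≤ (q : ℝ) ^ (-t) :=
    fun q => Real.rpow_nonneg (Nat.cast_nonneg q) _
  have hx2 : ∀ q ∈ P, ((q : ℝ) ^ (-t)) ^ 2 = (q : ℝ) ^ (-(2 * t)) := by
    intro q hq
    have hq0 : (0:ℝ) < (q:ℕ) := by exact_mod_cast (hP q hq).pos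
    rw [sq, ← Real.rpow_add hq0]
    congr 1
    ring
  have hQP : P.filter (fun r => p ≤ r) ⊆ P := Finset.filter_subset _ _
  set u : ℝ := ∑ q ∈ P.filter (fun r => p ≤ r), (q : ℝ) ^ (-t) with hudef
  set c : ℝ := ∑ q ∈ P.filter (fun r => p ≤ r), ((q : ℝ) ^ (-t)) ^ 2 with hcdef
  set s1 : ℝ := ∑ q ∈ P, (q : ℝ) ^ (-t) with hs1def
  set s2 : ℝ := ∑ q ∈ P, (q : ℝ) ^ (-(2 * t)) with hs2def
  have hu_nonneg : 0 ≤ u := Finset.sum_nonneg (fun q _ => hxnonneg q)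
  have hc_nonneg : 0 ≤ c := Finset.sum_nonneg (fun q _ => sq_nonneg _)
  have hu_le : u ≤ s1 :=
    Finset.sum_le_sum_of_subset_of_nonneg hQP (fun q _ _ => hxnonneg q)
  have hc_le : c ≤ s2 := by
    rw [hcdef, Finset.sum_congr rfl (fun q hq => hx2 q (hQP hq))]
    exact Finset.sum_le_sum_of_subset_of_nonneg hQP
      (fun q _ _ => Real.rpow_nonneg (Nat.cast_nonneg q) _)
  have hc_le_u2 : c ≤ u ^ 2 :=
    sum_sq_le_sq_sum _ _ (fun q _ => hxnonneg q)
  have hs2_le : s2 ≤ s1 ^ 2 := by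
    have h := sum_sq_le_sq_sum P (fun q => (q : ℝ) ^ (-t)) (fun q _ => hxnonneg q)
    rw [hs2def, ← Finset.sum_congr rfl (fun q hq => hx2 q hq)]
    exact h
  have hs2_le_one : s2 ≤ 1 := by
    by_contra h
    push_neg at h
    have hz : Real.sqrt (1 - s2) = 0 := by
      rw [Real.sqrt_eq_zero']
      linarith
    rw [hz] at hineq
    nlinarith
  have hquad : u ^ 2 - 2 * u + c ≤ 0 := by
    rcases le_or_gt u 1 with h1 | h1
    · nlinarith
    · have h1c : 0 ≤ 1 - c := by linarith
      have hmono : Real.sqrt (1 - s2) ≤ Real.sqrt (1 - c) :=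
        Real.sqrt_le_sqrt (by linarith)
      have hu1 : u - 1 ≤ Real.sqrt (1 - c) := by linarith
      have hsq : Real.sqrt (1 - c) ^ 2 = 1 - c := Real.sq_sqrt h1c
      nlinarith [Real.sqrt_nonneg (1 - c),
        mul_self_le_mul_self (by linarith : (0:ℝ) ≤ u - 1) hu1]
  have hF1 : ∀ r : ℕ, Fval P t 1 r = ∑ q ∈ P.filter (fun s => r ≤ s), (q : ℝ) ^ (-t) := by
    intro r
    rw [Fval]
    exact Finset.sum_congr rfl (fun q _ => by rw [Fval, mul_one])
  have hfilter : ∀ q ∈ P.filter (fun r => p ≤ r),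
      P.filter (fun r => q ≤ r) = (P.filter (fun r => p ≤ r)).filter (fun r => q ≤ r) := by
    intro q hq
    have hpq : p ≤ q := (Finset.mem_filter.mp hq).2
    rw [Finset.filter_filter]
    refine (Finset.filter_congr (fun r _ => ?_)).symm
    constructor
    · rintro ⟨-, hqr⟩; exact hqr
    · intro hqr; exact ⟨hpq.trans hqr, hqr⟩
  have hF2 : Fval P t 2 p = ∑ q ∈ P.filter (fun r => p ≤ r),
      ∑ r ∈ (P.filter (fun r => p ≤ r)).filter (fun r => q ≤ r),
        (q : ℝ) ^ (-t) * (r : ℝ) ^ (-t) := by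
    rw [Fval]
    refine Finset.sum_congr rfl (fun q hq => ?_)
    rw [hF1 q, hfilter q hq, Finset.mul_sum]
  have hid := symm_identity (P.filter (fun r => p ≤ r)) (fun q => (q : ℝ) ^ (-t))
  rw [← hF2] at hid
  have hF1p : Fval P t 1 p = u := hF1 p
  rw [hF1p]
  nlinarith [hid]

lemma Fval_mono (P : Finset ℕ) (t : ℝ) (ht : 1 < t) (hP : ∀ p ∈ P, Nat.Prime p)
    (hineq : ∑ p ∈ P, (p : ℝ) ^ (-t) ≤
      1 + Real.sqrt (1 - ∑ p ∈ P, (p : ℝ) ^ (-(2 * t)))) :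
    ∀ k, 1 ≤ k → ∀ p, Fval P t (k + 1) p ≤ Fval P t k p := by
  intro k hk
  induction k, hk using Nat.le_induction with
  | base => exact Fval_base P t ht hP hineq
  | succ k hk ih =>
    intro p
    rw [Fval, Fval]
    refine Finset.sum_le_sum (fun q hq => ?_)
    exact mul_le_mul_of_nonneg_left (ih q) (Real.rpow_nonneg (Nat.cast_nonneg q) _)

theorem Nk_sums_decreasing (t : ℝ) (ht : 1 < t) (P : Finset ℕ)
    (hP : ∀ p ∈ P, Nat.Prime p)
    (hineq : ∑ p ∈ P, (p : ℝ) ^ (-t) ≤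
      1 + Real.sqrt (1 - ∑ p ∈ P, (p : ℝ) ^ (-(2 * t))))
    (k : ℕ) (hk : 1 ≤ k) :
    ∑' n : NkSet ↑P (k + 1), (n : ℝ) ^ (-t) ≤ ∑' n : NkSet ↑P k, (n : ℝ) ^ (-t) := by
  have hset : ∀ j, NkSet ↑P j = ↑(Aset P j 0) := by
    intro j
    ext n
    rw [Finset.mem_coe, mem_Aset hP]
    simp only [iff_self_and]
    intro _
    exact fun q _ _ => Nat.zero_le q
  have h1 := Finset.tsum_subtype' (Aset P (k+1) 0) (fun n : ℕ => (n : ℝ) ^ (-t))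
  have h2 := Finset.tsum_subtype' (Aset P k 0) (fun n : ℕ => (n : ℝ) ^ (-t))
  rw [hset (k + 1), hset k, h1, h2, sum_Aset P hP t (k + 1) 0, sum_Aset P hP t k 0]
  exact Fval_mono P t ht hP hineq k hk 0
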